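/- Let R be an associative unital ring in which 2 is invertible, with a derivation ∂. Let φ ∈ R be a unit such that ∂φ is a unit, and set ψ := φ⁻¹ (so that ∂ψ = −φ⁻¹·(∂φ)·φ⁻¹ is a unit). Then the non-Abelian Schwarzian derivatives satisfy {ψ; x} = φ·{φ; x}·φ⁻¹. -/

import Mathlib

/-- A (not necessarily commutative) derivation on a ring: an additive map
satisfying the Leibniz rule. -/
def IsDeriv {R : Type*} [Ring R] (d : R → R) : Prop :=
  (∀ a b, d (a + b) = d a + d b) ∧ (∀ a b, d (a * b) = d a * b + a * d b)

/-- The non-Abelian Schwarzian derivative. -/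
noncomputable def schw {R : Type*} [Ring R] [Invertible (2 : R)] (d : R → R) (φ : R) : R :=
  d (Ring.inverse (d φ) * d (d φ)) - ⅟(2 : R) * (Ring.inverse (d φ) * d (d φ)) ^ 2

set_option maxRecDepth 10000 in
theorem stmt_3 {R : Type*} [Ring R] [Invertible (2 : R)]
    (d : R → R) (hd : IsDeriv d)
    (φ : R) (hφ : IsUnit φ) (hφx : IsUnit (d φ)) :
    schw d (Ring.inverse φ) = φ * schw d φ * Ring.inverse φ := by
  obtain ⟨hadd, hmul⟩ := hd
  have d1 : d 1 = 0 := by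
    have h := hmul 1 1
    simp only [mul_one, one_mul] at h
    exact (right_eq_add.mp h)
  have dneg : ∀ a : R, d (-a) = -(d a) := by
    intro a
    have h := hadd a (-a)
    rw [add_neg_cancel] at h
    have h0 : d (0 : R) = 0 := by
      have := hadd 0 0
      simpa using this
    rw [h0] at h
    exact (neg_eq_of_add_eq_zero_right h.symm).symm
  have dsub : ∀ a b : R, d (a - b) = d a - d b := by
    intro a b
    rw [sub_eq_add_neg, hadd, dneg, sub_eq_add_neg]
  have d2 : d (2 : R) = 0 := by
    rw [show (2 : R) = 1 + 1 by norm_num, hadd, d1, add_zero]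
  have hAA' : φ * (Ring.inverse φ) = 1 := Ring.mul_inverse_cancel _ hφ
  have hA'A : (Ring.inverse φ) * φ = 1 := Ring.inverse_mul_cancel _ hφ
  have hFF' : (d φ) * (Ring.inverse (d φ)) = 1 := Ring.mul_inverse_cancel _ hφx
  have hF'F : (Ring.inverse (d φ)) * (d φ) = 1 := Ring.inverse_mul_cancel _ hφx
  have cAA' : ∀ x : R, φ * ((Ring.inverse φ) * x) = x := fun x => by rw [← mul_assoc, hAA', one_mul]
  have cA'A : ∀ x : R, (Ring.inverse φ) * (φ * x) = x := fun x => by rw [← mul_assoc, hA'A, one_mul]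
  have cFF' : ∀ x : R, (d φ) * ((Ring.inverse (d φ)) * x) = x := fun x => by rw [← mul_assoc, hFF', one_mul]
  have cF'F : ∀ x : R, (Ring.inverse (d φ)) * ((d φ) * x) = x := fun x => by rw [← mul_assoc, hF'F, one_mul]
  have c2' : ∀ x : R, (2 : R) * x = x * 2 := fun x => by rw [two_mul, mul_two]
  have c2 : ∀ x y : R, x * ((2 : R) * y) = 2 * (x * y) := by
    intro x y
    rw [two_mul, mul_add, two_mul]
  have chalf2 : ∀ x : R, ⅟(2 : R) * ((2 : R) * x) = x := by
    intro x; rw [← mul_assoc, invOf_mul_self, one_mul]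
  have chalf : ∀ x y : R, x * (⅟(2 : R) * y) = ⅟(2 : R) * (x * y) := by
    intro x y
    have h : (2 : R) * (x * (⅟(2 : R) * y)) = x * y := by
      rw [← mul_assoc, c2', mul_assoc, ← mul_assoc (2 : R), mul_invOf_self, one_mul]
    rw [← h, chalf2]
  have dA' : d (Ring.inverse φ) = -((Ring.inverse φ) * (d φ) * (Ring.inverse φ)) := by
    have h : d (φ * (Ring.inverse φ)) = 0 := by rw [hAA', d1]
    rw [hmul φ (Ring.inverse φ)] at h
    have h2 : φ * d (Ring.inverse φ) = -((d φ) * (Ring.inverse φ)) := by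
      have := eq_neg_of_add_eq_zero_right h
      rw [this]
    calc d (Ring.inverse φ) = (Ring.inverse φ) * (φ * d (Ring.inverse φ)) := (cA'A _).symm
      _ = (Ring.inverse φ) * (-((d φ) * (Ring.inverse φ))) := by rw [h2]
      _ = -((Ring.inverse φ) * (d φ) * (Ring.inverse φ)) := by rw [mul_neg, mul_assoc]
  have hinv : Ring.inverse (d (Ring.inverse φ)) = -(φ * (Ring.inverse (d φ)) * φ) := by
    have m1 : d (Ring.inverse φ) * (-(φ * (Ring.inverse (d φ)) * φ)) = 1 := by
      rw [dA']
      calc -((Ring.inverse φ) * (d φ) * (Ring.inverse φ)) * -(φ * (Ring.inverse (d φ)) * φ) = (Ring.inverse φ) * ((d φ) * ((Ring.inverse φ) * (φ * ((Ring.inverse (d φ)) * φ)))) := by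
            rw [neg_mul_neg]; noncomm_ring
        _ = 1 := by rw [cA'A, cFF', hA'A]
    have m2 : (-(φ * (Ring.inverse (d φ)) * φ)) * d (Ring.inverse φ) = 1 := by
      rw [dA']
      calc -(φ * (Ring.inverse (d φ)) * φ) * -((Ring.inverse φ) * (d φ) * (Ring.inverse φ)) = φ * ((Ring.inverse (d φ)) * (φ * ((Ring.inverse φ) * ((d φ) * (Ring.inverse φ))))) := by
            rw [neg_mul_neg]; noncomm_ring
        _ = 1 := by rw [cAA', cF'F, hAA']
    exact Ring.inverse_unit ⟨d (Ring.inverse φ), -(φ * (Ring.inverse (d φ)) * φ), m1, m2⟩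
  have ddA' : d (d (Ring.inverse φ)) = 2 * ((Ring.inverse φ) * ((d φ) * ((Ring.inverse φ) * ((d φ) * (Ring.inverse φ))))) - (Ring.inverse φ) * ((d (d φ)) * (Ring.inverse φ)) := by
    rw [dA', dneg, hmul ((Ring.inverse φ) * (d φ)) (Ring.inverse φ), hmul (Ring.inverse φ) (d φ), dA']
    noncomm_ring
  have hW : Ring.inverse (d (Ring.inverse φ)) * d (d (Ring.inverse φ)) = φ * ((Ring.inverse (d φ)) * (d (d φ))) * (Ring.inverse φ) - 2 * ((d φ) * (Ring.inverse φ)) := by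
    rw [hinv, ddA']
    simp only [neg_mul, mul_neg, neg_neg, mul_sub, sub_mul, mul_add, add_mul, mul_assoc, c2,
      cAA', cA'A, cFF', cF'F]
    noncomm_ring
  simp only [schw]
  rw [hW]
  rw [dsub, hmul (φ * ((Ring.inverse (d φ)) * (d (d φ)))) (Ring.inverse φ), hmul φ ((Ring.inverse (d φ)) * (d (d φ))), hmul 2 ((d φ) * (Ring.inverse φ)), hmul (d φ) (Ring.inverse φ),
    dA', d2]
  simp only [pow_two]
  simp only [neg_mul, mul_neg, neg_neg, mul_sub, sub_mul, mul_add, add_mul, mul_assoc, c2,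
    cAA', cA'A, cFF', cF'F, zero_mul, mul_zero, zero_add, add_zero]
  simp only [chalf, chalf2, mul_assoc, cAA', cA'A, cFF', cF'F]
  noncomm_ring
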